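/- Let m, n be positive integers, 1 ≤ k ≤ m, and 1 ≤ s ≤ q. Set ρ := (m s q)/(k q + (m−k) s). Then for every scalar matrix (a_i)_{i ∈ {1,…,n}^m}, (∑_{i ∈ {1,…,n}^m} |a_i|^ρ)^{1/ρ} ≤ ∏_{S ∈ P_k(m)} [ (∑_{i_S} (∑_{i_{Ŝ}} |a_i|^q)^{s/q})^{1/s} ]^{1/C(m,k)}, where the product is over all subsets S of {1,…,m} of cardinality k, C(m,k) is the binomial coefficient, i_S denotes the indices with coordinates in S, and Ŝ = {1,…,m} \ S. -/

import Mathlib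

open Finset

open NNReal

/-- Combine an assignment `g` of indices on the coordinates in `S` with an
assignment `h` on the complementary coordinates into a full multi-index. -/
def mergeIndex {m n : ℕ} (S : Finset (Fin m)) (g : {x // x ∈ S} → Fin n)
    (h : {x // x ∈ Sᶜ} → Fin n) : Fin m → Fin n :=
  fun j => if hj : j ∈ S then g ⟨j, hj⟩ else h ⟨j, Finset.mem_compl.mpr hj⟩


lemma prod_rpow_const_weight {ι : Type*} (T : Finset ι) (w : ι → ℝ)
    (hw1 : ∑ i ∈ T, w i = 1) (z : ℝ≥0) : ∏ i ∈ T, z ^ w i = z := by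
  rcases eq_or_ne z 0 with rfl | hz
  · obtain ⟨i, hiT, hiw⟩ : ∃ i ∈ T, w i ≠ 0 := by
      by_contra h
      push_neg at h
      rw [Finset.sum_eq_zero h] at hw1
      norm_num at hw1
    rw [Finset.prod_eq_zero hiT (NNReal.zero_rpow hiw)]
  · have hz' : (0:ℝ) < (z:ℝ) := by positivity
    apply NNReal.coe_injective
    push_cast
    rw [← Real.rpow_sum_of_pos hz' w T, hw1, Real.rpow_one]

/-- Generalized Hölder inequality for finite sums in `ℝ≥0`. -/
lemma holder_weighted {ι κ : Type*} [Fintype κ] (T : Finset ι) (w : ι → ℝ)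
    (f : ι → κ → ℝ≥0) (hw : ∀ i ∈ T, 0 ≤ w i) (hw1 : ∑ i ∈ T, w i = 1) :
    ∑ j : κ, ∏ i ∈ T, f i j ^ w i ≤ ∏ i ∈ T, (∑ j : κ, f i j) ^ w i := by
  -- reduce to the case where all weights are nonzero
  set T' := T.filter (fun i => w i ≠ 0) with hT'
  have hwsum' : ∑ i ∈ T', w i = 1 := by
    rw [hT', Finset.sum_filter_ne_zero, hw1]
  have hprodred : ∀ g : ι → ℝ≥0, ∏ i ∈ T, g i ^ w i = ∏ i ∈ T', g i ^ w i := by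
    intro g
    rw [hT', Finset.prod_filter_of_ne]
    intro x _ hne h0
    exact hne (by rw [h0, NNReal.rpow_zero])
  simp only [hprodred]
  have hT'w : ∀ i ∈ T', w i ≠ 0 := fun i hi => (Finset.mem_filter.mp hi).2
  have hT'w0 : ∀ i ∈ T', 0 ≤ w i := fun i hi => hw i (Finset.filter_subset _ _ hi)
  clear_value T'
  -- main case split on vanishing norms
  by_cases hvan : ∃ i ∈ T', ∑ j : κ, f i j = 0
  · obtain ⟨i, hiT, hiz⟩ := hvan
    have hf0 : ∀ j : κ, f i j = 0 := by
      intro j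
      have := Finset.sum_eq_zero_iff.mp hiz
      exact this j (Finset.mem_univ j)
    have : ∑ j : κ, ∏ i ∈ T', f i j ^ w i = 0 := by
      apply Finset.sum_eq_zero
      intro j _
      exact Finset.prod_eq_zero hiT (by rw [hf0 j, NNReal.zero_rpow (hT'w i hiT)])
    rw [this]
    exact zero_le
  · push_neg at hvan
    set N : ι → ℝ≥0 := fun i => ∑ j : κ, f i j with hN
    have hNne : ∀ i ∈ T', N i ≠ 0 := hvan
    -- weights as NNReal
    set W : ι → ℝ≥0 := fun i => Real.toNNReal (w i) with hW
    have hWc : ∀ i ∈ T', (W i : ℝ) = w i := fun i hi => Real.coe_toNNReal _ (hT'w0 i hi)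
    have hWsum : ∑ i ∈ T', W i = 1 := by
      apply NNReal.coe_injective
      push_cast
      rw [Finset.sum_congr rfl hWc, hwsum']
    calc ∑ j : κ, ∏ i ∈ T', f i j ^ w i
        = ∑ j : κ, ((∏ i ∈ T', N i ^ w i) * ∏ i ∈ T', (f i j / N i) ^ w i) := by
          apply Finset.sum_congr rfl
          intro j _
          rw [← Finset.prod_mul_distrib]
          apply Finset.prod_congr rfl
          intro i hi
          rw [← NNReal.mul_rpow]
          congr 1
          rw [mul_comm (N i), div_mul_cancel₀ _ (hNne i hi)]
      _ = (∏ i ∈ T', N i ^ w i) * ∑ j : κ, ∏ i ∈ T', (f i j / N i) ^ w i := by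
          rw [Finset.mul_sum]
      _ ≤ (∏ i ∈ T', N i ^ w i) * ∑ j : κ, ∑ i ∈ T', W i * (f i j / N i) := by
          apply mul_le_mul_right
          apply Finset.sum_le_sum
          intro j _
          have := NNReal.geom_mean_le_arith_mean_weighted T' W (fun i => f i j / N i) hWsum
          refine le_trans (le_of_eq ?_) this
          apply Finset.prod_congr rfl
          intro i hi
          rw [hWc i hi]
      _ = (∏ i ∈ T', N i ^ w i) * ∑ i ∈ T', W i * ((∑ j : κ, f i j) / N i) := by
          rw [Finset.sum_comm]
          congr 1
          apply Finset.sum_congr rfl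
          intro i _
          rw [← Finset.mul_sum, ← Finset.sum_div]
      _ = ∏ i ∈ T', N i ^ w i := by
          have : ∑ i ∈ T', W i * ((∑ j : κ, f i j) / N i) = 1 := by
            rw [← hWsum]
            apply Finset.sum_congr rfl
            intro i hi
            have : (∑ j : κ, f i j) / N i = 1 := div_self (hNne i hi)
            rw [this, mul_one]
          rw [this, mul_one]


/-- Minkowski for a finite family: the `ℓ^p` norm of a sum is at most the sum of norms. -/
lemma Lp_sum_le {ι β : Type*} [Fintype β] (T : Finset ι) {p : ℝ} (hp : 1 ≤ p)
    (Y : ι → β → ℝ≥0) :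
    (∑ b : β, (∑ a ∈ T, Y a b) ^ p) ^ (1/p) ≤ ∑ a ∈ T, (∑ b : β, (Y a b) ^ p) ^ (1/p) := by
  classical
  induction T using Finset.induction_on with
  | empty =>
    simp only [Finset.sum_empty]
    rw [NNReal.zero_rpow (by positivity), Finset.sum_const, smul_zero,
      NNReal.zero_rpow (by positivity)]
  | insert a T' hnotmem ih =>
    simp only [Finset.sum_insert hnotmem]
    calc (∑ b : β, (Y a b + ∑ x ∈ T', Y x b) ^ p) ^ (1/p)
        ≤ (∑ b : β, (Y a b) ^ p) ^ (1/p) + (∑ b : β, (∑ x ∈ T', Y x b) ^ p) ^ (1/p) :=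
          NNReal.Lp_add_le _ _ _ hp
      _ ≤ _ := add_le_add_right ih _

/-- Mixed-norm Minkowski: pulling the smaller exponent outside gives a larger norm. -/
lemma minkowski_swap {α β : Type*} [Fintype α] [Fintype β] {s q : ℝ}
    (hs : 0 < s) (hsq : s ≤ q) (Y : α → β → ℝ≥0) :
    (∑ a : α, (∑ b : β, (Y a b) ^ s) ^ (q/s)) ^ (1/q) ≤
      (∑ b : β, (∑ a : α, (Y a b) ^ q) ^ (s/q)) ^ (1/s) := by
  have hq : 0 < q := lt_of_lt_of_le hs hsq
  have hp1 : 1 ≤ q / s := (one_le_div hs).mpr hsq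
  have key := Lp_sum_le (Finset.univ : Finset β) hp1 (fun b a => (Y a b) ^ s)
  -- key : (∑ a, (∑ b, Y a b ^ s) ^ (q/s)) ^ (s/q) ≤ ∑ b, (∑ a, (Y a b ^ s) ^ (q/s)) ^ (s/q)
  rw [one_div_div] at key
  have key2 : (∑ a : α, (∑ b : β, (Y a b) ^ s) ^ (q/s)) ^ (s/q) ≤
      ∑ b : β, (∑ a : α, (Y a b) ^ q) ^ (s/q) := by
    refine le_trans key (le_of_eq ?_)
    apply Finset.sum_congr rfl
    intro b _
    congr 1
    apply Finset.sum_congr rfl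
    intro a _
    rw [← NNReal.rpow_mul]
    congr 1
    field_simp
  calc (∑ a : α, (∑ b : β, (Y a b) ^ s) ^ (q/s)) ^ (1/q)
      = ((∑ a : α, (∑ b : β, (Y a b) ^ s) ^ (q/s)) ^ (s/q)) ^ (1/s) := by
        rw [← NNReal.rpow_mul]
        congr 1
        field_simp
    _ ≤ (∑ b : β, (∑ a : α, (Y a b) ^ q) ^ (s/q)) ^ (1/s) :=
        NNReal.rpow_le_rpow key2 (by positivity)

noncomputable def MN (n : ℕ) : (m : ℕ) → (Fin m → ℝ) → ((Fin m → Fin n) → ℝ≥0) → ℝ≥0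
  | 0, _, x => x (fun i => i.elim0)
  | (m+1), p, x =>
      (∑ i0 : Fin n, (MN n m (fun j => p j.succ) (fun t => x (Fin.cons i0 t))) ^ (p 0)) ^ (1 / p 0)

lemma MN_interpolation (n : ℕ) {ι : Type*} (T : Finset ι) (w : ι → ℝ)
    (hw : ∀ i ∈ T, 0 ≤ w i) (hw1 : ∑ i ∈ T, w i = 1) :
    ∀ (m : ℕ) (P : ι → Fin m → ℝ) (p : Fin m → ℝ),
      (∀ i ∈ T, ∀ j, 1 ≤ P i j) →
      (∀ j, 1 / p j = ∑ i ∈ T, w i / P i j) →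
      ∀ x : (Fin m → Fin n) → ℝ≥0, MN n m p x ≤ ∏ i ∈ T, (MN n m (P i) x) ^ (w i)
  | 0, P, p, hP, hp, x => by
    simp only [MN]
    rw [prod_rpow_const_weight T w hw1]
  | (m+1), P, p, hP, hp, x => by
    have hp0inv : 0 < 1 / p 0 := by
      rw [hp 0]
      obtain ⟨i₀, hi₀T, hi₀⟩ : ∃ i ∈ T, w i ≠ 0 := by
        by_contra h
        push_neg at h
        rw [Finset.sum_eq_zero h] at hw1
        norm_num at hw1
      apply Finset.sum_pos' (fun i hi =>
        div_nonneg (hw i hi) (le_of_lt (lt_of_lt_of_le one_pos (hP i hi 0))))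
      refine ⟨i₀, hi₀T, ?_⟩
      have h1 : (0:ℝ) < P i₀ 0 := lt_of_lt_of_le one_pos (hP i₀ hi₀T 0)
      have h2 : 0 < w i₀ := lt_of_le_of_ne (hw i₀ hi₀T) (Ne.symm hi₀)
      positivity
    have hp0 : 0 < p 0 := one_div_pos.mp hp0inv
    have hPpos : ∀ i ∈ T, (0:ℝ) < P i 0 := fun i hi =>
      lt_of_lt_of_le one_pos (hP i hi 0)
    -- Hölder weights for the outer sum
    set w' : ι → ℝ := fun i => w i * (p 0 / P i 0) with hw'def
    have hw'0 : ∀ i ∈ T, 0 ≤ w' i := by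
      intro i hi
      have := hPpos i hi
      have := hw i hi
      have := hp0
      positivity
    have hw'1 : ∑ i ∈ T, w' i = 1 := by
      have : ∑ i ∈ T, w' i = p 0 * ∑ i ∈ T, w i / P i 0 := by
        rw [Finset.mul_sum]
        apply Finset.sum_congr rfl
        intro i _
        rw [hw'def]
        ring
      rw [this, ← hp 0, mul_one_div, div_self (ne_of_gt hp0)]
    -- the IH applied fiberwise
    set Y : ι → Fin n → ℝ≥0 :=
      fun i i0 => MN n m (fun j => P i j.succ) (fun t => x (Fin.cons i0 t)) with hY
    have ihY : ∀ i0 : Fin n,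
        MN n m (fun j => p j.succ) (fun t => x (Fin.cons i0 t)) ≤ ∏ i ∈ T, (Y i i0) ^ (w i) := by
      intro i0
      exact MN_interpolation n T w hw hw1 m (fun i j => P i j.succ) (fun j => p j.succ)
        (fun i hi j => hP i hi j.succ) (fun j => hp j.succ) _
    simp only [MN]
    calc (∑ i0 : Fin n, (MN n m (fun j => p j.succ) (fun t => x (Fin.cons i0 t))) ^ p 0) ^ (1 / p 0)
        ≤ (∑ i0 : Fin n, (∏ i ∈ T, (Y i i0) ^ (w i)) ^ p 0) ^ (1 / p 0) := by
          apply NNReal.rpow_le_rpow _ (le_of_lt hp0inv)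
          apply Finset.sum_le_sum
          intro i0 _
          exact NNReal.rpow_le_rpow (ihY i0) (le_of_lt hp0)
      _ = (∑ i0 : Fin n, ∏ i ∈ T, ((Y i i0) ^ (P i 0)) ^ (w' i)) ^ (1 / p 0) := by
          congr 1
          apply Finset.sum_congr rfl
          intro i0 _
          rw [← NNReal.finset_prod_rpow]
          apply Finset.prod_congr rfl
          intro i hi
          rw [← NNReal.rpow_mul, ← NNReal.rpow_mul]
          congr 1
          have h1 := ne_of_gt (hPpos i hi)
          rw [hw'def]
          field_simp
      _ ≤ (∏ i ∈ T, (∑ i0 : Fin n, (Y i i0) ^ (P i 0)) ^ (w' i)) ^ (1 / p 0) := by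
          apply NNReal.rpow_le_rpow _ (le_of_lt hp0inv)
          exact holder_weighted T w' (fun i i0 => (Y i i0) ^ (P i 0)) hw'0 hw'1
      _ = ∏ i ∈ T, ((∑ i0 : Fin n, (Y i i0) ^ (P i 0)) ^ (1 / P i 0)) ^ (w i) := by
          rw [← NNReal.finset_prod_rpow]
          apply Finset.prod_congr rfl
          intro i hi
          rw [← NNReal.rpow_mul, ← NNReal.rpow_mul]
          congr 1
          rw [hw'def]
          have h1 := ne_of_gt (hPpos i hi)
          have h2 := ne_of_gt hp0
          field_simp


noncomputable def Jgen {γ δ : Type*} [Fintype γ] [Fintype δ] (s q : ℝ)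
    (y : γ → δ → ℝ≥0) : ℝ≥0 :=
  (∑ g : γ, (∑ h : δ, (y g h) ^ q) ^ (s/q)) ^ (1/s)

lemma Jgen_comp_equiv {γ γ' δ δ' : Type*} [Fintype γ] [Fintype δ] [Fintype γ'] [Fintype δ']
    (s q : ℝ) (e : γ' ≃ γ) (e' : δ' ≃ δ) (y : γ → δ → ℝ≥0) :
    Jgen s q (fun g h => y (e g) (e' h)) = Jgen s q y := by
  unfold Jgen
  congr 1
  rw [← Equiv.sum_comp e (fun g => (∑ h : δ, (y g h) ^ q) ^ (s/q))]
  apply Finset.sum_congr rfl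
  intro g _
  congr 1
  rw [← Equiv.sum_comp e' (fun h => (y (e g) h) ^ q)]

lemma Jgen_cons_outer {γ δ : Type*} [Fintype γ] [Fintype δ] {n : ℕ} {s q : ℝ}
    (hs : s ≠ 0) (Y : Fin n × γ → δ → ℝ≥0) :
    (∑ i0 : Fin n, (Jgen s q (fun g h => Y (i0, g) h)) ^ s) ^ (1/s) = Jgen s q Y := by
  unfold Jgen
  rw [Fintype.sum_prod_type]
  congr 1
  apply Finset.sum_congr rfl
  intro i0 _
  rw [← NNReal.rpow_mul, one_div_mul_cancel hs, NNReal.rpow_one]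

lemma Jgen_cons_inner {γ δ : Type*} [Fintype γ] [Fintype δ] {n : ℕ} {s q : ℝ}
    (hs : 0 < s) (hsq : s ≤ q) (Y : γ → Fin n × δ → ℝ≥0) :
    (∑ i0 : Fin n, (Jgen s q (fun g h => Y g (i0, h))) ^ q) ^ (1/q) ≤ Jgen s q Y := by
  have hq : 0 < q := lt_of_lt_of_le hs hsq
  have key := minkowski_swap hs hsq (fun (i0 : Fin n) (g : γ) =>
    (∑ h : δ, (Y g (i0, h)) ^ q) ^ (1/q))
  have e1 : ∀ B : ℝ≥0, (B ^ ((1:ℝ)/q)) ^ s = B ^ (s/q) := fun B => by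
    rw [← NNReal.rpow_mul, one_div_mul_eq_div]
  have e2 : ∀ B : ℝ≥0, (B ^ ((1:ℝ)/q)) ^ q = B := fun B => by
    rw [← NNReal.rpow_mul, one_div_mul_cancel (ne_of_gt hq), NNReal.rpow_one]
  simp only [e1, e2] at key
  refine le_trans (le_of_eq ?_) (le_trans key (le_of_eq ?_))
  · congr 1
    refine Finset.sum_congr rfl fun i0 _ => ?_
    unfold Jgen
    rw [← NNReal.rpow_mul, one_div_mul_eq_div]
  · unfold Jgen
    congr 1
    refine Finset.sum_congr rfl fun g _ => ?_
    congr 1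
    rw [Fintype.sum_prod_type]

/-- Splitting off coordinate `0` when `0 ∈ S`. -/
def consSubtypeEquiv {n m : ℕ} (S : Finset (Fin (m+1))) (S' : Finset (Fin m))
    (hmem : ∀ j, j ∈ S' ↔ j.succ ∈ S) (h0 : 0 ∈ S) :
    Fin n × ({j : Fin m // j ∈ S'} → Fin n) ≃ ({j : Fin (m+1) // j ∈ S} → Fin n) where
  toFun := fun p j =>
    Fin.cases (motive := fun j => j ∈ S → Fin n)
      (fun _ => p.1) (fun i hi => p.2 ⟨i, (hmem i).mpr hi⟩) j.1 j.2
  invFun := fun g => (g ⟨0, h0⟩, fun i => g ⟨i.1.succ, (hmem i.1).mp i.2⟩)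
  left_inv := by
    intro ⟨i0, g'⟩
    refine Prod.ext ?_ ?_
    · simp
    · funext i
      simp
  right_inv := by
    intro g
    funext j
    obtain ⟨j, hj⟩ := j
    induction j using Fin.cases with
    | zero => simp
    | succ i => simp
/-- Transferring along `Fin.succ` when `0 ∉ S`. -/
def succSubtypeEquiv {n m : ℕ} (S : Finset (Fin (m+1))) (S' : Finset (Fin m))
    (hmem : ∀ j, j ∈ S' ↔ j.succ ∈ S) (h0 : 0 ∉ S) :
    ({j : Fin m // j ∈ S'} → Fin n) ≃ ({j : Fin (m+1) // j ∈ S} → Fin n) where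
  toFun := fun g j =>
    Fin.cases (motive := fun j => j ∈ S → Fin n)
      (fun hc => absurd hc h0) (fun i hi => g ⟨i, (hmem i).mpr hi⟩) j.1 j.2
  invFun := fun g i => g ⟨i.1.succ, (hmem i.1).mp i.2⟩
  left_inv := by
    intro g
    funext i
    simp
  right_inv := by
    intro g
    funext j
    obtain ⟨j, hj⟩ := j
    induction j using Fin.cases with
    | zero => exact absurd hj h0
    | succ i => simp

lemma compl_hmem {m : ℕ} (S : Finset (Fin (m+1))) (S' : Finset (Fin m))
    (hmem : ∀ j, j ∈ S' ↔ j.succ ∈ S) : ∀ j, j ∈ S'ᶜ ↔ j.succ ∈ Sᶜ := by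
  intro j
  simp [Finset.mem_compl, hmem]

lemma merge_cons_mem {n m : ℕ} (S : Finset (Fin (m+1))) (S' : Finset (Fin m))
    (hmem : ∀ j, j ∈ S' ↔ j.succ ∈ S) (h0 : 0 ∈ S)
    (i0 : Fin n) (g' : {j // j ∈ S'} → Fin n) (h' : {j // j ∈ S'ᶜ} → Fin n) :
    mergeIndex S (consSubtypeEquiv S S' hmem h0 (i0, g'))
      (succSubtypeEquiv Sᶜ S'ᶜ (compl_hmem S S' hmem) (by simp [h0]) h') =
    Fin.cons i0 (mergeIndex S' g' h') := by
  funext j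
  induction j using Fin.cases with
  | zero => simp [mergeIndex, consSubtypeEquiv, h0]
  | succ i =>
    by_cases hi : i ∈ S'
    · simp [mergeIndex, consSubtypeEquiv, hi, (hmem i).mp hi]
    · have hns : i.succ ∉ S := fun hc => hi ((hmem i).mpr hc)
      simp [mergeIndex, succSubtypeEquiv, hi, hns]

lemma merge_cons_not_mem {n m : ℕ} (S : Finset (Fin (m+1))) (S' : Finset (Fin m))
    (hmem : ∀ j, j ∈ S' ↔ j.succ ∈ S) (h0 : 0 ∉ S)
    (i0 : Fin n) (g' : {j // j ∈ S'} → Fin n) (h' : {j // j ∈ S'ᶜ} → Fin n) :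
    mergeIndex S (succSubtypeEquiv S S' hmem h0 g')
      (consSubtypeEquiv Sᶜ S'ᶜ (compl_hmem S S' hmem) (by simp [h0]) (i0, h')) =
    Fin.cons i0 (mergeIndex S' g' h') := by
  funext j
  induction j using Fin.cases with
  | zero => simp [mergeIndex, consSubtypeEquiv, h0]
  | succ i =>
    by_cases hi : i ∈ S'
    · simp [mergeIndex, succSubtypeEquiv, hi, (hmem i).mp hi]
    · have hns : i.succ ∉ S := fun hc => hi ((hmem i).mpr hc)
      simp [mergeIndex, consSubtypeEquiv, hi, hns]


set_option maxHeartbeats 2000000 in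
lemma MN_le_J (n : ℕ) {s q : ℝ} (hs : 1 ≤ s) (hsq : s ≤ q) :
    ∀ (m : ℕ) (S : Finset (Fin m)) (x : (Fin m → Fin n) → ℝ≥0),
      MN n m (fun j => if j ∈ S then s else q) x ≤
        Jgen s q (fun (g : {j // j ∈ S} → Fin n) (h : {j // j ∈ Sᶜ} → Fin n) =>
          x (mergeIndex S g h))
  | 0, S, x => by
    have hspos : (0:ℝ) < s := lt_of_lt_of_le one_pos hs
    have hqpos : (0:ℝ) < q := lt_of_lt_of_le hspos hsq
    haveI hE1 : IsEmpty {j : Fin 0 // j ∈ S} := ⟨fun j => j.1.elim0⟩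
    haveI hE2 : IsEmpty {j : Fin 0 // j ∈ Sᶜ} := ⟨fun j => j.1.elim0⟩
    simp only [MN]
    unfold Jgen
    rw [Fintype.sum_unique, Fintype.sum_unique]
    rw [← NNReal.rpow_mul, ← NNReal.rpow_mul]
    have hexp : q * (s / q * (1 / s)) = 1 := by field_simp
    rw [hexp, NNReal.rpow_one]
    show x (fun i => i.elim0) ≤ x (mergeIndex S default default)
    exact le_of_eq (congrArg x (funext fun j => j.elim0))
  | (m+1), S, x => by
    have hspos : (0:ℝ) < s := lt_of_lt_of_le one_pos hs
    have hqpos : (0:ℝ) < q := lt_of_lt_of_le hspos hsq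
    set S' : Finset (Fin m) := Finset.univ.filter (fun j => j.succ ∈ S) with hS'
    have hmem : ∀ j, j ∈ S' ↔ j.succ ∈ S := by intro j; simp [hS']
    have hptail : (fun j : Fin m => if j.succ ∈ S then s else q) =
        (fun j => if j ∈ S' then s else q) := by
      funext j
      by_cases h : j ∈ S'
      · rw [if_pos h, if_pos ((hmem j).mp h)]
      · rw [if_neg h, if_neg (fun hc => h ((hmem j).mpr hc))]
    have ih : ∀ i0 : Fin n,
        MN n m (fun j => if j ∈ S' then s else q) (fun t => x (Fin.cons i0 t)) ≤
          Jgen s q (fun (g' : {j // j ∈ S'} → Fin n) (h' : {j // j ∈ S'ᶜ} → Fin n) =>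
            x (Fin.cons i0 (mergeIndex S' g' h'))) := fun i0 =>
      MN_le_J n hs hsq m S' (fun t => x (Fin.cons i0 t))
    simp only [MN, hptail]
    by_cases h0 : (0 : Fin (m+1)) ∈ S
    · rw [if_pos h0]
      calc (∑ i0 : Fin n, (MN n m (fun j => if j ∈ S' then s else q)
              (fun t => x (Fin.cons i0 t))) ^ s) ^ (1/s)
          ≤ (∑ i0 : Fin n, (Jgen s q
              (fun (g' : {j // j ∈ S'} → Fin n) (h' : {j // j ∈ S'ᶜ} → Fin n) =>
                x (Fin.cons i0 (mergeIndex S' g' h')))) ^ s) ^ (1/s) := by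
            apply NNReal.rpow_le_rpow _ (by positivity)
            apply Finset.sum_le_sum
            intro i0 _
            exact NNReal.rpow_le_rpow (ih i0) (le_of_lt hspos)
        _ = Jgen s q (fun (p : Fin n × ({j // j ∈ S'} → Fin n))
              (h' : {j // j ∈ S'ᶜ} → Fin n) =>
                x (Fin.cons p.1 (mergeIndex S' p.2 h'))) :=
            Jgen_cons_outer (ne_of_gt hspos) (fun (p : Fin n × ({j // j ∈ S'} → Fin n))
              (h' : {j // j ∈ S'ᶜ} → Fin n) => x (Fin.cons p.1 (mergeIndex S' p.2 h')))
        _ = Jgen s q (fun (g : {j // j ∈ S} → Fin n) (h : {j // j ∈ Sᶜ} → Fin n) =>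
              x (mergeIndex S g h)) := by
            rw [← Jgen_comp_equiv s q (consSubtypeEquiv S S' hmem h0)
              (succSubtypeEquiv Sᶜ S'ᶜ (compl_hmem S S' hmem) (by simp [h0]))]
            congr 1
            funext p h'
            obtain ⟨i0, g'⟩ := p
            rw [merge_cons_mem S S' hmem h0 i0 g' h']
    · rw [if_neg h0]
      calc (∑ i0 : Fin n, (MN n m (fun j => if j ∈ S' then s else q)
              (fun t => x (Fin.cons i0 t))) ^ q) ^ (1/q)
          ≤ (∑ i0 : Fin n, (Jgen s q
              (fun (g' : {j // j ∈ S'} → Fin n) (h' : {j // j ∈ S'ᶜ} → Fin n) =>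
                x (Fin.cons i0 (mergeIndex S' g' h')))) ^ q) ^ (1/q) := by
            apply NNReal.rpow_le_rpow _ (by positivity)
            apply Finset.sum_le_sum
            intro i0 _
            exact NNReal.rpow_le_rpow (ih i0) (le_of_lt hqpos)
        _ ≤ Jgen s q (fun (g' : {j // j ∈ S'} → Fin n)
              (p : Fin n × ({j // j ∈ S'ᶜ} → Fin n)) =>
                x (Fin.cons p.1 (mergeIndex S' g' p.2))) :=
            Jgen_cons_inner hspos hsq (fun (g' : {j // j ∈ S'} → Fin n)
              (p : Fin n × ({j // j ∈ S'ᶜ} → Fin n)) =>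
                x (Fin.cons p.1 (mergeIndex S' g' p.2)))
        _ = Jgen s q (fun (g : {j // j ∈ S} → Fin n) (h : {j // j ∈ Sᶜ} → Fin n) =>
              x (mergeIndex S g h)) := by
            rw [← Jgen_comp_equiv s q (succSubtypeEquiv S S' hmem h0)
              (consSubtypeEquiv Sᶜ S'ᶜ (compl_hmem S S' hmem) (by simp [h0]))]
            congr 1
            funext g' p
            obtain ⟨i0, h'⟩ := p
            rw [merge_cons_not_mem S S' hmem h0 i0 g' h']


lemma card_filter_mem_powersetCard {α : Type*} [DecidableEq α] [Fintype α]
    (a : α) (k : ℕ) (hk : 1 ≤ k) :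
    ((Finset.powersetCard k (Finset.univ : Finset α)).filter (fun S => a ∈ S)).card
      = (Fintype.card α - 1).choose (k-1) := by
  have hcard : (Finset.univ.erase a).card = Fintype.card α - 1 := by
    rw [Finset.card_erase_of_mem (Finset.mem_univ a), Finset.card_univ]
  rw [← hcard, ← Finset.card_powersetCard]
  refine Finset.card_bij' (fun S _ => S.erase a) (fun B _ => insert a B) ?_ ?_ ?_ ?_
  case _ =>
    intro S hS
    simp only [Finset.mem_filter, Finset.mem_powersetCard] at hS
    obtain ⟨⟨_, hScard⟩, haS⟩ := hS
    simp only [Finset.mem_powersetCard]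
    constructor
    · intro x hx
      rw [Finset.mem_erase] at hx ⊢
      exact ⟨hx.1, Finset.mem_univ x⟩
    · rw [Finset.card_erase_of_mem haS, hScard]
  case _ =>
    intro B hB
    simp only [Finset.mem_powersetCard] at hB
    obtain ⟨hBsub, hBcard⟩ := hB
    have haB : a ∉ B := fun hc => (Finset.mem_erase.mp (hBsub hc)).1 rfl
    simp only [Finset.mem_filter, Finset.mem_powersetCard]
    refine ⟨⟨Finset.subset_univ _, ?_⟩, Finset.mem_insert_self a B⟩
    rw [Finset.card_insert_of_notMem haB, hBcard]
    omega
  case _ =>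
    intro S hS
    simp only [Finset.mem_filter] at hS
    exact Finset.insert_erase hS.2
  case _ =>
    intro B hB
    simp only [Finset.mem_powersetCard] at hB
    have haB : a ∉ B := fun hc => (Finset.mem_erase.mp (hB.1 hc)).1 rfl
    exact Finset.erase_insert haB

lemma card_filter_not_mem_powersetCard {α : Type*} [DecidableEq α] [Fintype α]
    (a : α) (k : ℕ) :
    ((Finset.powersetCard k (Finset.univ : Finset α)).filter (fun S => a ∉ S)).card
      = (Fintype.card α - 1).choose k := by
  have hcard : (Finset.univ.erase a).card = Fintype.card α - 1 := by
    rw [Finset.card_erase_of_mem (Finset.mem_univ a), Finset.card_univ]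
  rw [← hcard, ← Finset.card_powersetCard]
  refine Finset.card_bij' (fun S _ => S) (fun B _ => B) ?_ ?_ ?_ ?_
  case _ =>
    intro S hS
    simp only [Finset.mem_filter, Finset.mem_powersetCard] at hS
    simp only [Finset.mem_powersetCard]
    refine ⟨fun x hx => Finset.mem_erase.mpr ⟨fun hc => hS.2 (hc ▸ hx), Finset.mem_univ x⟩,
      hS.1.2⟩
  case _ =>
    intro B hB
    simp only [Finset.mem_powersetCard] at hB
    simp only [Finset.mem_filter, Finset.mem_powersetCard]
    exact ⟨⟨Finset.subset_univ _, hB.2⟩, fun hc => (Finset.mem_erase.mp (hB.1 hc)).1 rfl⟩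
  case _ =>
    intro _ _; rfl
  case _ =>
    intro _ _; rfl


lemma MN_const (n : ℕ) {ρ : ℝ} (hρ : ρ ≠ 0) :
    ∀ (m : ℕ) (x : (Fin m → Fin n) → ℝ≥0),
      MN n m (fun _ => ρ) x = (∑ i : Fin m → Fin n, x i ^ ρ) ^ (1/ρ)
  | 0, x => by
    simp only [MN]
    rw [Fintype.sum_unique, ← NNReal.rpow_mul, mul_one_div, div_self hρ, NNReal.rpow_one]
    exact congrArg x (funext fun j => j.elim0)
  | (m+1), x => by
    simp only [MN]
    congr 1
    rw [← Equiv.sum_comp (Fin.consEquiv (fun _ : Fin (m+1) => Fin n))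
      (fun i => x i ^ ρ), Fintype.sum_prod_type]
    apply Finset.sum_congr rfl
    intro i0 _
    rw [MN_const n hρ m (fun t => x (Fin.cons i0 t)), ← NNReal.rpow_mul,
      one_div_mul_cancel hρ, NNReal.rpow_one]
    rfl


lemma choose_facts (m k : ℕ) (hm : 0 < m) (hk1 : 1 ≤ k) (hkm : k ≤ m) :
    m * (m-1).choose (k-1) = m.choose k * k ∧
    m.choose k = (m-1).choose (k-1) + (m-1).choose k := by
  have h1 : (m-1)+1 = m := Nat.succ_pred_eq_of_pos hm
  have h2 : (k-1)+1 = k := Nat.succ_pred_eq_of_pos hk1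
  constructor
  · have := Nat.add_one_mul_choose_eq (m-1) (k-1)
    rw [h1, h2] at this
    exact this
  · have := Nat.choose_succ_succ (m-1) (k-1)
    simp only [Nat.succ_eq_add_one] at this
    rw [h1, h2] at this
    exact this

lemma weight_sum_eq (m k : ℕ) (hm : 0 < m) (hk1 : 1 ≤ k) (hkm : k ≤ m)
    (s q : ℝ) (hs : 1 ≤ s) (hsq : s ≤ q) (j : Fin m) :
    ((k:ℝ)*q + ((m-k:ℕ):ℝ)*s) / ((m:ℝ)*s*q) =
      ∑ S ∈ Finset.powersetCard k (Finset.univ : Finset (Fin m)),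
        (1/(m.choose k : ℝ)) / (if j ∈ S then s else q) := by
  have hspos : (0:ℝ) < s := lt_of_lt_of_le one_pos hs
  have hqpos : (0:ℝ) < q := lt_of_lt_of_le hspos hsq
  have hCpos : 0 < m.choose k := Nat.choose_pos hkm
  have hCne : ((m.choose k : ℕ):ℝ) ≠ 0 := ne_of_gt (by exact_mod_cast hCpos)
  have hmne : ((m:ℕ):ℝ) ≠ 0 := ne_of_gt (by exact_mod_cast hm)
  rw [← Finset.sum_filter_add_sum_filter_not _ (fun S => j ∈ S)]
  have e1 : ∑ S ∈ (Finset.powersetCard k (Finset.univ : Finset (Fin m))).filter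
        (fun S => j ∈ S), (1/(m.choose k : ℝ)) / (if j ∈ S then s else q)
      = ((m-1).choose (k-1) : ℝ) * ((1/(m.choose k : ℝ))/s) := by
    rw [Finset.sum_congr rfl (fun S hS => by
      rw [if_pos (Finset.mem_filter.mp hS).2]), Finset.sum_const, nsmul_eq_mul,
      card_filter_mem_powersetCard j k hk1, Fintype.card_fin]
  have e2 : ∑ S ∈ (Finset.powersetCard k (Finset.univ : Finset (Fin m))).filter
        (fun S => ¬ j ∈ S), (1/(m.choose k : ℝ)) / (if j ∈ S then s else q)
      = ((m-1).choose k : ℝ) * ((1/(m.choose k : ℝ))/q) := by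
    rw [Finset.sum_congr rfl (fun S hS => by
      rw [if_neg (Finset.mem_filter.mp hS).2]), Finset.sum_const, nsmul_eq_mul,
      card_filter_not_mem_powersetCard j k, Fintype.card_fin]
  rw [e1, e2]
  obtain ⟨f1, f2⟩ := choose_facts m k hm hk1 hkm
  have hCk : (m:ℝ) * ((m-1).choose (k-1) : ℝ) = (m.choose k : ℝ) * k := by
    exact_mod_cast congrArg (Nat.cast : ℕ → ℝ) f1
  have hsum : (m.choose k : ℝ) = ((m-1).choose (k-1) : ℝ) + ((m-1).choose k : ℝ) := by
    exact_mod_cast congrArg (Nat.cast : ℕ → ℝ) f2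
  have hmk : ((m-k : ℕ):ℝ) = (m:ℝ) - (k:ℝ) := by
    rw [Nat.cast_sub hkm]
  have hM : (m:ℝ) * ((m-1).choose k : ℝ) = (m.choose k : ℝ) * ((m:ℝ) - (k:ℝ)) := by
    linear_combination (-(m:ℝ)) * hsum - hCk
  rw [hmk]
  have hr : ((m-1).choose (k-1) : ℝ) * (1/(m.choose k : ℝ)/s) +
      ((m-1).choose k : ℝ) * (1/(m.choose k : ℝ)/q) =
      (((m-1).choose (k-1) : ℝ)*q + ((m-1).choose k : ℝ)*s)/((m.choose k : ℝ)*(s*q)) := by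
    field_simp
  rw [hr, div_eq_div_iff (by positivity) (by positivity)]
  linear_combination (-(s*q*q))*hCk + (-(s*s*q))*hM


theorem blei_nn (m n k : ℕ) (hm : 0 < m) (hn : 0 < n)
    (hk1 : 1 ≤ k) (hkm : k ≤ m) (s q : ℝ) (hs : 1 ≤ s) (hsq : s ≤ q)
    (x : (Fin m → Fin n) → ℝ≥0) :
    (∑ i : Fin m → Fin n, x i ^ (((m:ℝ) * s * q) / ((k:ℝ) * q + ((m - k : ℕ):ℝ) * s))) ^
        (((k:ℝ) * q + ((m - k : ℕ):ℝ) * s) / ((m:ℝ) * s * q)) ≤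
      ∏ S ∈ Finset.powersetCard k (Finset.univ : Finset (Fin m)),
        ((∑ g : {j // j ∈ S} → Fin n,
            (∑ h : {j // j ∈ Sᶜ} → Fin n, (x (mergeIndex S g h)) ^ q) ^ (s / q)) ^
          (1 / s)) ^ (1 / (Nat.choose m k : ℝ)) := by
  have hspos : (0:ℝ) < s := lt_of_lt_of_le one_pos hs
  have hqpos : (0:ℝ) < q := lt_of_lt_of_le hspos hsq
  have hD : (0:ℝ) < (k:ℝ) * q + ((m - k : ℕ):ℝ) * s := by
    have hk : (0:ℝ) < (k:ℝ) := by exact_mod_cast hk1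
    have : (0:ℝ) ≤ ((m - k : ℕ):ℝ) * s := by positivity
    nlinarith
  have hmpos : (0:ℝ) < (m:ℝ) := by exact_mod_cast hm
  set ρ : ℝ := ((m:ℝ) * s * q) / ((k:ℝ) * q + ((m - k : ℕ):ℝ) * s) with hρdef
  have hρpos : 0 < ρ := by positivity
  have hρ : ρ ≠ 0 := ne_of_gt hρpos
  have hCpos : 0 < m.choose k := Nat.choose_pos hkm
  have hCne : ((m.choose k : ℕ):ℝ) ≠ 0 := ne_of_gt (by exact_mod_cast hCpos)
  have hexp : ((k:ℝ) * q + ((m - k : ℕ):ℝ) * s) / ((m:ℝ) * s * q) = 1/ρ := by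
    rw [hρdef, one_div_div]
  rw [hexp]
  -- interpolation setup
  set T := Finset.powersetCard k (Finset.univ : Finset (Fin m)) with hT
  have hw1 : ∑ _S ∈ T, (1/(m.choose k : ℝ)) = 1 := by
    rw [Finset.sum_const, nsmul_eq_mul, hT, Finset.card_powersetCard, Finset.card_univ,
      Fintype.card_fin, mul_one_div, div_self hCne]
  have hinterp := MN_interpolation n T (fun _ => 1/(m.choose k : ℝ))
    (fun _ _ => by positivity) hw1 m (fun S j => if j ∈ S then s else q) (fun _ => ρ)
    (fun S _ j => by split <;> [exact hs; exact le_trans hs hsq])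
    (fun j => by
      rw [one_div_div]
      exact weight_sum_eq m k hm hk1 hkm s q hs hsq j)
    x
  rw [MN_const n hρ m x] at hinterp
  refine le_trans hinterp (Finset.prod_le_prod' ?_)
  intro S _
  refine NNReal.rpow_le_rpow ?_ (by positivity)
  exact MN_le_J n hs hsq m S x

/-- **Generalized Blei inequality** (Bayart–Pellegrino–Seoane-Sepúlveda):
for `1 ≤ k ≤ m`, `1 ≤ s ≤ q` and `ρ = msq/(kq+(m-k)s)`,
`(∑_i |a_i|^ρ)^{1/ρ} ≤ ∏_{S ∈ P_k(m)} [(∑_{i_S}(∑_{i_Ŝ}|a_i|^q)^{s/q})^{1/s}]^{1/C(m,k)}`. -/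
theorem blei_interpolation (m n k : ℕ) (hm : 0 < m) (hn : 0 < n)
    (hk1 : 1 ≤ k) (hkm : k ≤ m) (s q : ℝ) (hs : 1 ≤ s) (hsq : s ≤ q)
    (a : (Fin m → Fin n) → ℂ) :
    (∑ i : Fin m → Fin n, ‖a i‖ ^ ((m * s * q) / (k * q + (m - k : ℕ) * s))) ^
        ((k * q + (m - k : ℕ) * s) / (m * s * q)) ≤
      ∏ S ∈ Finset.powersetCard k (Finset.univ : Finset (Fin m)),
        ((∑ g : {x // x ∈ S} → Fin n,
            (∑ h : {x // x ∈ Sᶜ} → Fin n, ‖a (mergeIndex S g h)‖ ^ q) ^ (s / q)) ^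
          (1 / s)) ^ (1 / (Nat.choose m k : ℝ)) := by
  have key := blei_nn m n k hm hn hk1 hkm s q hs hsq (fun i => ‖a i‖₊)
  have key2 := NNReal.coe_le_coe.mpr key
  simp only [NNReal.coe_rpow, NNReal.coe_sum, NNReal.coe_prod, coe_nnnorm] at key2
  exact key2
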